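/- The Gaussian scale space solves the diffusion equation: if z : ℝⁿ → ℝ is bounded and continuous, then the function u(t, x) = (G_t ⋆ z)(x) satisfies, for every t > 0 and x ∈ ℝⁿ, the heat equation ∂u/∂t(t, x) = (1/4)·Δ_x u(t, x), where Δ_x denotes the Laplacian in the spatial variables. -/

import Mathlib

open MeasureTheory Real

set_option maxHeartbeats 1000000
set_option synthInstance.maxHeartbeats 1000000

/-- The Gaussian kernel at scale `t` on `ℝⁿ`: `G_t(x) = (π t)^(−n/2) · exp(−‖x‖²/t)`. -/
noncomputable def gaussKernel (n : ℕ) (t : ℝ) (x : EuclideanSpace ℝ (Fin n)) : ℝ :=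
  (Real.pi * t) ^ (-(n : ℝ) / 2) * Real.exp (-‖x‖ ^ 2 / t)

/-- Gaussian blur of `z` at scale `t`: `(G_t ⋆ z)(x) = ∫ G_t(x − y) z(y) dy`. -/
noncomputable def gaussBlur (n : ℕ) (t : ℝ) (z : EuclideanSpace ℝ (Fin n) → ℝ)
    (x : EuclideanSpace ℝ (Fin n)) : ℝ :=
  ∫ y, gaussKernel n t (x - y) * z y

/-- The Laplacian of `f : ℝⁿ → ℝ` at `x`: the sum of second partial derivatives. -/
noncomputable def laplacian (n : ℕ) (f : EuclideanSpace ℝ (Fin n) → ℝ)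
    (x : EuclideanSpace ℝ (Fin n)) : ℝ :=
  ∑ i : Fin n, fderiv ℝ (fun y => fderiv ℝ f y (EuclideanSpace.single i 1)) x
      (EuclideanSpace.single i 1)

section helpers

variable {n : ℕ}

local notation "E" => EuclideanSpace ℝ (Fin n)

lemma mul_exp_neg_le {b u : ℝ} (hb : 0 < b) (hu : 0 ≤ u) :
    u * Real.exp (-(b * u)) ≤ 1 / b := by
  have h1 : b * u ≤ Real.exp (b * u) := by
    have := Real.add_one_le_exp (b * u); linarith
  have h2 : u ≤ Real.exp (b * u) / b := by
    rw [le_div_iff₀ hb]; linarith [h1]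
  calc u * Real.exp (-(b * u)) ≤ (Real.exp (b * u) / b) * Real.exp (-(b * u)) := by
        apply mul_le_mul_of_nonneg_right h2 (Real.exp_nonneg _)
    _ = 1 / b := by
        rw [Real.exp_neg]; field_simp

lemma gaussKernel_nonneg {t : ℝ} (ht : 0 < t) (w : E) : 0 ≤ gaussKernel n t w :=
  mul_nonneg (Real.rpow_nonneg (by positivity) _) (Real.exp_nonneg _)

lemma continuous_gaussKernel {t : ℝ} : Continuous (gaussKernel n t) := by
  unfold gaussKernel
  fun_prop

lemma integrable_gauss_shift {c : ℝ} (hc : 0 < c) (x₀ : E) :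
    Integrable (fun y : E => Real.exp (-(c * ‖x₀ - y‖ ^ 2))) := by
  have h : Integrable (fun v : E => Real.exp (-(c * ‖v‖ ^ 2))) := by
    have h0 := (GaussianFourier.integrable_cexp_neg_mul_sq_norm_add (V := E) (b := (c : ℂ))
      (by simpa using hc) 0 (0 : E)).norm
    apply h0.congr
    apply Filter.Eventually.of_forall
    intro v
    simp only [Complex.norm_exp]
    norm_num
    left
    norm_cast
  exact h.comp_sub_left x₀


lemma hasDerivAt_gaussKernel_time (w : E) {s : ℝ} (hs : 0 < s) :
    HasDerivAt (fun s => gaussKernel n s w)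
      ((-(n : ℝ) / (2 * s) + ‖w‖ ^ 2 / s ^ 2) * gaussKernel n s w) s := by
  have hπs : (0 : ℝ) < Real.pi * s := by positivity
  have h1 : HasDerivAt (fun s : ℝ => Real.pi * s) Real.pi s := by
    simpa using (hasDerivAt_id s).const_mul Real.pi
  have h2 : HasDerivAt (fun s : ℝ => (Real.pi * s) ^ (-(n : ℝ) / 2))
      ((-(n : ℝ) / 2 * (Real.pi * s) ^ (-(n : ℝ) / 2 - 1)) * Real.pi) s :=
    (Real.hasDerivAt_rpow_const (Or.inl hπs.ne')).comp s h1
  have h3 : HasDerivAt (fun s : ℝ => -‖w‖ ^ 2 / s) (‖w‖ ^ 2 / s ^ 2) s := by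
    have h := (hasDerivAt_inv hs.ne').const_mul (-‖w‖ ^ 2)
    have heq : (fun y : ℝ => -‖w‖ ^ 2 * y⁻¹) = fun y : ℝ => -‖w‖ ^ 2 / y := by
      funext y; ring
    rw [heq] at h
    refine h.congr_deriv ?_
    ring
  have h4 := h3.exp
  have := h2.mul h4
  refine this.congr_deriv ?_
  have hrw : (Real.pi * s) ^ (-(n : ℝ) / 2 - 1) =
      (Real.pi * s) ^ (-(n : ℝ) / 2) / (Real.pi * s) := by
    rw [Real.rpow_sub hπs, Real.rpow_one]
  unfold gaussKernel
  rw [hrw]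
  have hπ : Real.pi ≠ 0 := Real.pi_ne_zero
  field_simp

lemma norm_sq_eq_sum_sq (w : E) : ‖w‖ ^ 2 = ∑ i, (w i) ^ 2 := by
  rw [EuclideanSpace.norm_eq, Real.sq_sqrt (by positivity)]
  simp [sq_abs]

lemma hasFDerivAt_gaussKernel_space {t : ℝ} (ht : 0 < t) (w : E) :
    HasFDerivAt (gaussKernel n t)
      (((-2 / t) * gaussKernel n t w) • (innerSL ℝ w : E →L[ℝ] ℝ)) w := by
  have h0 : HasFDerivAt (fun w : E => (inner ℝ w w : ℝ))
      ((2 : ℝ) • (innerSL ℝ w : E →L[ℝ] ℝ)) w := by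
    have := (hasFDerivAt_id w).inner ℝ (hasFDerivAt_id w)
    refine this.congr_fderiv ?_
    ext v
    simp [real_inner_comm, two_smul]
  have h1 : HasFDerivAt (fun w : E => (-1 / t) * (inner ℝ w w : ℝ))
      ((-1 / t) • ((2 : ℝ) • (innerSL ℝ w : E →L[ℝ] ℝ))) w := h0.const_mul _
  have h2 := h1.exp
  have h3 := h2.const_mul ((Real.pi * t) ^ (-(n : ℝ) / 2))
  have hfun : (gaussKernel n t : E → ℝ) =
      fun w : E => (Real.pi * t) ^ (-(n : ℝ) / 2) * Real.exp ((-1 / t) * (inner ℝ w w : ℝ)) := by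
    funext v
    unfold gaussKernel
    rw [real_inner_self_eq_norm_sq]
    ring_nf
  have h5 : HasFDerivAt (gaussKernel n t)
      (((Real.pi * t) ^ (-(n : ℝ) / 2)) • Real.exp ((-1 / t) * (inner ℝ w w : ℝ)) •
        ((-1 / t) • ((2 : ℝ) • (innerSL ℝ w : E →L[ℝ] ℝ)))) w :=
    h3.congr_of_eventuallyEq (Filter.Eventually.of_forall fun v => congrFun hfun v)
  convert h5 using 1
  ext v
  unfold gaussKernel
  rw [real_inner_self_eq_norm_sq]
  have harg : -1 / t * ‖w‖ ^ 2 = -‖w‖ ^ 2 / t := by ring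
  rw [harg]
  simp only [ContinuousLinearMap.coe_smul', Pi.smul_apply, smul_eq_mul]
  ring

lemma hasFDerivAt_gaussKernel_mul_proj {t : ℝ} (ht : 0 < t) (i : Fin n) (w : E) :
    HasFDerivAt (fun w : E => gaussKernel n t w * w i)
      (gaussKernel n t w • (EuclideanSpace.proj i : E →L[ℝ] ℝ) +
        (w i) • (((-2 / t) * gaussKernel n t w) • (innerSL ℝ w : E →L[ℝ] ℝ))) w := by
  have hp : HasFDerivAt (fun w : E => w i) (EuclideanSpace.proj (𝕜 := ℝ) i) w :=
    (EuclideanSpace.proj (𝕜 := ℝ) i).hasFDerivAt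
  exact (hasFDerivAt_gaussKernel_space ht w).mul hp


lemma gaussKernel_eq {t : ℝ} (w : E) :
    gaussKernel n t w = (Real.pi * t) ^ (-(n : ℝ) / 2) * Real.exp (-(‖w‖ ^ 2 / t)) := by
  unfold gaussKernel; ring_nf

lemma abs_coord_le (w : E) (i : Fin n) : |w i| ≤ ‖w‖ := by
  have h : (w i) ^ 2 ≤ ‖w‖ ^ 2 := by
    rw [norm_sq_eq_sum_sq]
    exact Finset.single_le_sum (f := fun j => (w j) ^ 2) (fun j _ => sq_nonneg _)
      (Finset.mem_univ i)
  nlinarith [abs_nonneg (w i), norm_nonneg w, sq_abs (w i)]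

lemma key_exp_est {t : ℝ} (ht : 0 < t) {x₀ x : E} (hx : ‖x - x₀‖ ≤ 1) (y : E) :
    Real.exp (-(‖x - y‖ ^ 2 / (2 * t))) ≤
      Real.exp (1 / (2 * t)) * Real.exp (-(1 / (4 * t) * ‖x₀ - y‖ ^ 2)) := by
  rw [← Real.exp_add]
  apply Real.exp_le_exp.mpr
  have h1 : ‖x₀ - y‖ ≤ 1 + ‖x - y‖ := by
    calc ‖x₀ - y‖ ≤ ‖x₀ - x‖ + ‖x - y‖ := by
          simpa using norm_add_le (x₀ - x) (x - y)
      _ ≤ 1 + ‖x - y‖ := by rw [norm_sub_rev]; linarith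
  have h2 : ‖x₀ - y‖ ^ 2 ≤ 2 + 2 * ‖x - y‖ ^ 2 := by
    have h2' : ‖x₀ - y‖ ^ 2 ≤ (1 + ‖x - y‖) ^ 2 := by
      apply pow_le_pow_left₀ (norm_nonneg _) h1
    nlinarith [sq_nonneg (1 - ‖x - y‖)]
  rw [← sub_nonneg]
  have h3 : 1 / (2 * t) + -(1 / (4 * t) * ‖x₀ - y‖ ^ 2) - -(‖x - y‖ ^ 2 / (2 * t)) =
      (2 + 2 * ‖x - y‖ ^ 2 - ‖x₀ - y‖ ^ 2) / (4 * t) := by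
    field_simp; ring
  rw [h3]
  apply div_nonneg (by linarith) (by linarith)

lemma quad_exp_est {t : ℝ} (ht : 0 < t) {a b : ℝ} (ha : 0 ≤ a) (hb : 0 ≤ b) {r : ℝ}
    (hr : 0 ≤ r) :
    (a + b * r ^ 2) * Real.exp (-(r ^ 2 / t)) ≤
      (a + 2 * t * b) * Real.exp (-(r ^ 2 / (2 * t))) := by
  have hsplit : Real.exp (-(r ^ 2 / t)) =
      Real.exp (-(r ^ 2 / (2 * t))) * Real.exp (-(r ^ 2 / (2 * t))) := by
    rw [← Real.exp_add]; congr 1; field_simp; ring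
  rw [hsplit, ← mul_assoc]
  apply mul_le_mul_of_nonneg_right _ (Real.exp_nonneg _)
  have hb1 : b * r ^ 2 * Real.exp (-(r ^ 2 / (2 * t))) ≤ b * (2 * t) := by
    have := mul_exp_neg_le (b := 1 / (2 * t)) (u := r ^ 2) (by positivity) (by positivity)
    have harg : -(1 / (2 * t) * r ^ 2) = -(r ^ 2 / (2 * t)) := by field_simp
    rw [harg] at this
    have h2t : 1 / (1 / (2 * t)) = 2 * t := by field_simp
    rw [h2t] at this
    calc b * r ^ 2 * Real.exp (-(r ^ 2 / (2 * t)))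
        = b * (r ^ 2 * Real.exp (-(r ^ 2 / (2 * t)))) := by ring
      _ ≤ b * (2 * t) := mul_le_mul_of_nonneg_left this hb
  have ha1 : a * Real.exp (-(r ^ 2 / (2 * t))) ≤ a := by
    have : Real.exp (-(r ^ 2 / (2 * t))) ≤ 1 := Real.exp_le_one_iff.mpr (neg_nonpos.mpr (by positivity))
    nlinarith
  nlinarith [Real.exp_nonneg (-(r ^ 2 / (2 * t)))]

lemma integrable_of_gauss_bound {F : Type*} [NormedAddCommGroup F] {f : E → F}
    (hf : AEStronglyMeasurable f volume)
    {K c : ℝ} (hc : 0 < c) (x₀ : E)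
    (hbd : ∀ y, ‖f y‖ ≤ K * Real.exp (-(c * ‖x₀ - y‖ ^ 2))) : Integrable f :=
  ((integrable_gauss_shift hc x₀).const_mul K).mono' hf (Filter.Eventually.of_forall hbd)


/-- The spatial fderiv of the Gaussian kernel as a continuous linear map. -/
noncomputable def K1 (n : ℕ) (t : ℝ) (w : EuclideanSpace ℝ (Fin n)) :
    EuclideanSpace ℝ (Fin n) →L[ℝ] ℝ :=
  ((-2 / t) * gaussKernel n t w) • (innerSL ℝ w)

/-- The fderiv of `w ↦ gaussKernel n t w * w i`. -/
noncomputable def K2 (n : ℕ) (t : ℝ) (i : Fin n) (w : EuclideanSpace ℝ (Fin n)) :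
    EuclideanSpace ℝ (Fin n) →L[ℝ] ℝ :=
  gaussKernel n t w • (EuclideanSpace.proj i : EuclideanSpace ℝ (Fin n) →L[ℝ] ℝ) +
    (w i) • K1 n t w

lemma continuous_K1 {t : ℝ} : Continuous (K1 n t) := by
  apply Continuous.fun_smul
  · exact continuous_const.mul continuous_gaussKernel
  · exact (innerSL ℝ).continuous

lemma continuous_K2 {t : ℝ} (i : Fin n) : Continuous (K2 n t i) := by
  apply Continuous.add
  · exact continuous_gaussKernel.smul continuous_const
  · exact ((EuclideanSpace.proj i).continuous).smul continuous_K1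

lemma norm_K1_le {t : ℝ} (ht : 0 < t) (w : E) :
    ‖K1 n t w‖ ≤ (2 / t) * gaussKernel n t w * ‖w‖ := by
  unfold K1
  rw [norm_smul (α := ℝ) (β := E →L[ℝ] ℝ) _ _, innerSL_apply_norm]
  have : ‖(-2 / t) * gaussKernel n t w‖ = (2 / t) * gaussKernel n t w := by
    rw [Real.norm_eq_abs, abs_mul, abs_of_nonneg (gaussKernel_nonneg ht w)]
    congr 1
    rw [abs_div]
    norm_num [abs_of_pos ht]
  rw [this]

lemma norm_proj_le (i : Fin n) : ‖(EuclideanSpace.proj i : E →L[ℝ] ℝ)‖ ≤ 1 := by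
  apply ContinuousLinearMap.opNorm_le_bound _ zero_le_one
  intro v
  rw [one_mul]
  simpa using abs_coord_le v i

lemma norm_K2_le {t : ℝ} (ht : 0 < t) (i : Fin n) (w : E) :
    ‖K2 n t i w‖ ≤ gaussKernel n t w * (1 + (2 / t) * ‖w‖ ^ 2) := by
  unfold K2
  calc ‖gaussKernel n t w • (EuclideanSpace.proj i : E →L[ℝ] ℝ) + (w i) • K1 n t w‖
      ≤ ‖gaussKernel n t w • (EuclideanSpace.proj i : E →L[ℝ] ℝ)‖ + ‖(w i) • K1 n t w‖ :=
        norm_add_le _ _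
    _ ≤ gaussKernel n t w * 1 + ‖w‖ * ((2 / t) * gaussKernel n t w * ‖w‖) := by
        apply add_le_add
        · rw [norm_smul (α := ℝ) (β := E →L[ℝ] ℝ) _ _, Real.norm_eq_abs,
            abs_of_nonneg (gaussKernel_nonneg ht w)]
          exact mul_le_mul_of_nonneg_left (norm_proj_le i) (gaussKernel_nonneg ht w)
        · rw [norm_smul (α := ℝ) (β := E →L[ℝ] ℝ) _ _, Real.norm_eq_abs]
          exact mul_le_mul (abs_coord_le w i) (norm_K1_le ht w)
            (norm_nonneg _) (norm_nonneg _)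
    _ = gaussKernel n t w * (1 + (2 / t) * ‖w‖ ^ 2) := by ring

lemma hasFDerivAt_kernel_shift {t : ℝ} (ht : 0 < t) (y x : E) :
    HasFDerivAt (fun x : E => gaussKernel n t (x - y)) (K1 n t (x - y)) x := by
  have h := (hasFDerivAt_gaussKernel_space ht (x - y)).comp x ((hasFDerivAt_id x).sub_const y)
  refine h.congr_fderiv ?_; ext v; simp [K1]

lemma hasFDerivAt_kernel_mul_shift {t : ℝ} (ht : 0 < t) (i : Fin n) (y x : E) :
    HasFDerivAt (fun x : E => gaussKernel n t (x - y) * ((x - y) i)) (K2 n t i (x - y)) x := by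
  have h := (hasFDerivAt_gaussKernel_mul_proj ht i (x - y)).comp x
    ((hasFDerivAt_id x).sub_const y)
  refine h.congr_fderiv ?_; ext v; simp [K2, K1]


variable {z : EuclideanSpace ℝ (Fin n) → ℝ} {C t : ℝ}

lemma phi1_bound (ht : 0 < t) (hC : ∀ y, |z y| ≤ C) (x₀ x : E) (hx : ‖x - x₀‖ ≤ 1) (y : E) :
    ‖z y • K1 n t (x - y)‖ ≤
      (C * ((2 / t) * ((Real.pi * t) ^ (-(n : ℝ) / 2) * ((1 + 2 * t) * Real.exp (1 / (2 * t)))))) *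
        Real.exp (-(1 / (4 * t) * ‖x₀ - y‖ ^ 2)) := by
  have hC0 : 0 ≤ C := le_trans (abs_nonneg _) (hC y)
  have hG := gaussKernel_nonneg (n := n) ht (x - y)
  have h1 : ‖z y • K1 n t (x - y)‖ ≤ C * ((2 / t) * (gaussKernel n t (x - y) * ‖x - y‖)) := by
    rw [norm_smul (α := ℝ) (β := E →L[ℝ] ℝ) _ _, Real.norm_eq_abs]
    calc |z y| * ‖K1 n t (x - y)‖
        ≤ C * ((2 / t) * gaussKernel n t (x - y) * ‖x - y‖) :=
          mul_le_mul (hC y) (norm_K1_le ht _) (norm_nonneg _) hC0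
      _ = C * ((2 / t) * (gaussKernel n t (x - y) * ‖x - y‖)) := by ring
  have h2 : gaussKernel n t (x - y) * ‖x - y‖ ≤
      (Real.pi * t) ^ (-(n : ℝ) / 2) * ((1 + 1 * ‖x - y‖ ^ 2) * Real.exp (-(‖x - y‖ ^ 2 / t))) := by
    rw [gaussKernel_eq]
    have hr : ‖x - y‖ ≤ 1 + 1 * ‖x - y‖ ^ 2 := by nlinarith [sq_nonneg (1 - ‖x - y‖)]
    calc (Real.pi * t) ^ (-(n : ℝ) / 2) * Real.exp (-(‖x - y‖ ^ 2 / t)) * ‖x - y‖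
        = (Real.pi * t) ^ (-(n : ℝ) / 2) * (‖x - y‖ * Real.exp (-(‖x - y‖ ^ 2 / t))) := by ring
      _ ≤ (Real.pi * t) ^ (-(n : ℝ) / 2) *
            ((1 + 1 * ‖x - y‖ ^ 2) * Real.exp (-(‖x - y‖ ^ 2 / t))) := by
          apply mul_le_mul_of_nonneg_left _ (Real.rpow_nonneg (by positivity) _)
          exact mul_le_mul_of_nonneg_right hr (Real.exp_nonneg _)
  have h3 : (1 + 1 * ‖x - y‖ ^ 2) * Real.exp (-(‖x - y‖ ^ 2 / t)) ≤
      (1 + 2 * t * 1) * Real.exp (-(‖x - y‖ ^ 2 / (2 * t))) :=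
    quad_exp_est ht zero_le_one zero_le_one (norm_nonneg _)
  have h4 := key_exp_est ht hx y
  have hrp : (0:ℝ) ≤ (Real.pi * t) ^ (-(n : ℝ) / 2) := Real.rpow_nonneg (by positivity) _
  calc ‖z y • K1 n t (x - y)‖
      ≤ C * ((2 / t) * (gaussKernel n t (x - y) * ‖x - y‖)) := h1
    _ ≤ C * ((2 / t) * ((Real.pi * t) ^ (-(n : ℝ) / 2) *
          ((1 + 2 * t * 1) * Real.exp (-(‖x - y‖ ^ 2 / (2 * t)))))) := by
        apply mul_le_mul_of_nonneg_left _ hC0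
        apply mul_le_mul_of_nonneg_left _ (by positivity)
        calc gaussKernel n t (x - y) * ‖x - y‖
            ≤ (Real.pi * t) ^ (-(n : ℝ) / 2) *
              ((1 + 1 * ‖x - y‖ ^ 2) * Real.exp (-(‖x - y‖ ^ 2 / t))) := h2
          _ ≤ _ := mul_le_mul_of_nonneg_left h3 hrp
    _ ≤ (C * ((2 / t) * ((Real.pi * t) ^ (-(n : ℝ) / 2) * ((1 + 2 * t) * Real.exp (1 / (2 * t)))))) *
        Real.exp (-(1 / (4 * t) * ‖x₀ - y‖ ^ 2)) := by
        have := mul_le_mul_of_nonneg_left h4 (show (0:ℝ) ≤ 1 + 2 * t by linarith)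
        calc C * ((2 / t) * ((Real.pi * t) ^ (-(n : ℝ) / 2) *
              ((1 + 2 * t * 1) * Real.exp (-(‖x - y‖ ^ 2 / (2 * t))))))
            ≤ C * ((2 / t) * ((Real.pi * t) ^ (-(n : ℝ) / 2) *
              ((1 + 2 * t) * (Real.exp (1 / (2 * t)) *
                Real.exp (-(1 / (4 * t) * ‖x₀ - y‖ ^ 2)))))) := by
              apply mul_le_mul_of_nonneg_left _ hC0
              apply mul_le_mul_of_nonneg_left _ (by positivity)
              apply mul_le_mul_of_nonneg_left _ hrp
              calc (1 + 2 * t * 1) * Real.exp (-(‖x - y‖ ^ 2 / (2 * t)))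
                  = (1 + 2 * t) * Real.exp (-(‖x - y‖ ^ 2 / (2 * t))) := by ring
                _ ≤ (1 + 2 * t) * (Real.exp (1 / (2 * t)) *
                    Real.exp (-(1 / (4 * t) * ‖x₀ - y‖ ^ 2))) := this
          _ = _ := by ring

lemma phi2_bound (ht : 0 < t) (hC : ∀ y, |z y| ≤ C) (i : Fin n) (x₀ x : E)
    (hx : ‖x - x₀‖ ≤ 1) (y : E) :
    ‖((-2 / t) * z y) • K2 n t i (x - y)‖ ≤
      (C * ((Real.pi * t) ^ (-(n : ℝ) / 2) * ((2 / t + 2 * t * (4 / t ^ 2)) *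
        Real.exp (1 / (2 * t))))) * Real.exp (-(1 / (4 * t) * ‖x₀ - y‖ ^ 2)) := by
  have hC0 : 0 ≤ C := le_trans (abs_nonneg _) (hC y)
  have hG := gaussKernel_nonneg (n := n) ht (x - y)
  have hrp : (0:ℝ) ≤ (Real.pi * t) ^ (-(n : ℝ) / 2) := Real.rpow_nonneg (by positivity) _
  have h1 : ‖((-2 / t) * z y) • K2 n t i (x - y)‖ ≤
      C * ((Real.pi * t) ^ (-(n : ℝ) / 2) *
        ((2 / t + 4 / t ^ 2 * ‖x - y‖ ^ 2) * Real.exp (-(‖x - y‖ ^ 2 / t)))) := by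
    rw [norm_smul (α := ℝ) (β := E →L[ℝ] ℝ) _ _, Real.norm_eq_abs, abs_mul]
    have ha : |(-2 : ℝ) / t| = 2 / t := by
      rw [abs_div]; norm_num [abs_of_pos ht]
    rw [ha]
    calc 2 / t * |z y| * ‖K2 n t i (x - y)‖
        ≤ 2 / t * C * (gaussKernel n t (x - y) * (1 + (2 / t) * ‖x - y‖ ^ 2)) := by
          apply mul_le_mul (mul_le_mul_of_nonneg_left (hC y) (by positivity))
            (norm_K2_le ht i _) (norm_nonneg _) (by positivity)
      _ = C * (gaussKernel n t (x - y) * (2 / t + 4 / t ^ 2 * ‖x - y‖ ^ 2)) := by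
          field_simp
          ring
      _ = C * ((Real.pi * t) ^ (-(n : ℝ) / 2) *
          ((2 / t + 4 / t ^ 2 * ‖x - y‖ ^ 2) * Real.exp (-(‖x - y‖ ^ 2 / t)))) := by
          rw [gaussKernel_eq]
          ring
  have h3 : (2 / t + 4 / t ^ 2 * ‖x - y‖ ^ 2) * Real.exp (-(‖x - y‖ ^ 2 / t)) ≤
      (2 / t + 2 * t * (4 / t ^ 2)) * Real.exp (-(‖x - y‖ ^ 2 / (2 * t))) :=
    quad_exp_est ht (by positivity) (by positivity) (norm_nonneg _)
  have h4 := key_exp_est ht hx y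
  calc ‖((-2 / t) * z y) • K2 n t i (x - y)‖
      ≤ C * ((Real.pi * t) ^ (-(n : ℝ) / 2) *
        ((2 / t + 4 / t ^ 2 * ‖x - y‖ ^ 2) * Real.exp (-(‖x - y‖ ^ 2 / t)))) := h1
    _ ≤ C * ((Real.pi * t) ^ (-(n : ℝ) / 2) *
        ((2 / t + 2 * t * (4 / t ^ 2)) * Real.exp (-(‖x - y‖ ^ 2 / (2 * t))))) := by
        apply mul_le_mul_of_nonneg_left _ hC0
        exact mul_le_mul_of_nonneg_left h3 hrp
    _ ≤ _ := by
        have h5 : (2 / t + 2 * t * (4 / t ^ 2)) * Real.exp (-(‖x - y‖ ^ 2 / (2 * t))) ≤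
            (2 / t + 2 * t * (4 / t ^ 2)) * (Real.exp (1 / (2 * t)) *
              Real.exp (-(1 / (4 * t) * ‖x₀ - y‖ ^ 2))) :=
          mul_le_mul_of_nonneg_left h4 (by positivity)
        calc C * ((Real.pi * t) ^ (-(n : ℝ) / 2) *
              ((2 / t + 2 * t * (4 / t ^ 2)) * Real.exp (-(‖x - y‖ ^ 2 / (2 * t)))))
            ≤ C * ((Real.pi * t) ^ (-(n : ℝ) / 2) *
              ((2 / t + 2 * t * (4 / t ^ 2)) * (Real.exp (1 / (2 * t)) *
                Real.exp (-(1 / (4 * t) * ‖x₀ - y‖ ^ 2))))) := by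
              apply mul_le_mul_of_nonneg_left _ hC0
              exact mul_le_mul_of_nonneg_left h5 hrp
          _ = _ := by ring


lemma time_bound (ht : 0 < t) (hC : ∀ y, |z y| ≤ C) (x y : E) {s : ℝ}
    (hs1 : t / 2 < s) (hs2 : s < 3 * t / 2) :
    ‖(-(n : ℝ) / (2 * s) + ‖x - y‖ ^ 2 / s ^ 2) * gaussKernel n s (x - y) * z y‖ ≤
      (C * ((Real.pi * (t / 2)) ^ (-(n : ℝ) / 2) * ((n : ℝ) / t + 2 * (3 * t / 2) * (4 / t ^ 2)))) *
        Real.exp (-(1 / (3 * t) * ‖x - y‖ ^ 2)) := by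
  have hs0 : 0 < s := lt_trans (by positivity) hs1
  have hC0 : 0 ≤ C := le_trans (abs_nonneg _) (hC y)
  set r := ‖x - y‖ with hr
  have hr0 : 0 ≤ r := norm_nonneg _
  have hGs := gaussKernel_nonneg (n := n) hs0 (x - y)
  have hrp : (0:ℝ) ≤ (Real.pi * (t / 2)) ^ (-(n : ℝ) / 2) := Real.rpow_nonneg (by positivity) _
  -- |coefficient| bound
  have h1 : |(-(n : ℝ) / (2 * s) + r ^ 2 / s ^ 2)| ≤ (n : ℝ) / t + 4 / t ^ 2 * r ^ 2 := by
    have e1 : |(-(n : ℝ) / (2 * s))| = (n : ℝ) / (2 * s) := by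
      rw [abs_div, abs_neg, abs_of_nonneg (Nat.cast_nonneg n), abs_of_pos (by positivity)]
    have e2 : (n : ℝ) / (2 * s) ≤ (n : ℝ) / t := by
      apply div_le_div_of_nonneg_left (Nat.cast_nonneg n) ht
      linarith
    have e3 : r ^ 2 / s ^ 2 ≤ 4 / t ^ 2 * r ^ 2 := by
      rw [div_le_iff₀ (by positivity)] at *
      have hs2' : t ^ 2 / 4 ≤ s ^ 2 := by nlinarith
      calc r ^ 2 = r ^ 2 := rfl
        _ ≤ 4 / t ^ 2 * r ^ 2 * (t ^ 2 / 4) := by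
            field_simp; exact le_rfl
        _ ≤ 4 / t ^ 2 * r ^ 2 * s ^ 2 := by
            apply mul_le_mul_of_nonneg_left hs2' (by positivity)
    calc |(-(n : ℝ) / (2 * s) + r ^ 2 / s ^ 2)|
        ≤ |(-(n : ℝ) / (2 * s))| + |r ^ 2 / s ^ 2| := abs_add_le _ _
      _ = (n : ℝ) / (2 * s) + r ^ 2 / s ^ 2 := by
          rw [e1, abs_of_nonneg (by positivity)]
      _ ≤ (n : ℝ) / t + 4 / t ^ 2 * r ^ 2 := add_le_add e2 e3
  -- kernel bound
  have h2 : gaussKernel n s (x - y) ≤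
      (Real.pi * (t / 2)) ^ (-(n : ℝ) / 2) * Real.exp (-(r ^ 2 / (3 * t / 2))) := by
    rw [gaussKernel_eq]
    apply mul_le_mul
    · apply Real.rpow_le_rpow_of_nonpos (by positivity)
      · apply mul_le_mul_of_nonneg_left (le_of_lt hs1) Real.pi_pos.le
      · apply div_nonpos_of_nonpos_of_nonneg (neg_nonpos.mpr (Nat.cast_nonneg n)) zero_le_two
    · apply Real.exp_le_exp.mpr
      rw [neg_le_neg_iff]
      apply div_le_div_of_nonneg_left (by positivity) hs0
      linarith
    · exact Real.exp_nonneg _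
    · exact hrp
  have h3 : ((n : ℝ) / t + 4 / t ^ 2 * r ^ 2) * Real.exp (-(r ^ 2 / (3 * t / 2))) ≤
      ((n : ℝ) / t + 2 * (3 * t / 2) * (4 / t ^ 2)) * Real.exp (-(r ^ 2 / (2 * (3 * t / 2)))) :=
    quad_exp_est (by positivity) (by positivity) (by positivity) hr0
  have harg : -(r ^ 2 / (2 * (3 * t / 2))) = -(1 / (3 * t) * r ^ 2) := by
    field_simp
  rw [harg] at h3
  calc ‖(-(n : ℝ) / (2 * s) + r ^ 2 / s ^ 2) * gaussKernel n s (x - y) * z y‖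
      = |(-(n : ℝ) / (2 * s) + r ^ 2 / s ^ 2)| * gaussKernel n s (x - y) * |z y| := by
        rw [Real.norm_eq_abs, abs_mul, abs_mul, abs_of_nonneg hGs]
    _ ≤ (((n : ℝ) / t + 4 / t ^ 2 * r ^ 2) *
          ((Real.pi * (t / 2)) ^ (-(n : ℝ) / 2) * Real.exp (-(r ^ 2 / (3 * t / 2))))) * C := by
        apply mul_le_mul _ (hC y) (abs_nonneg _) _
        · exact mul_le_mul h1 h2 hGs (by positivity)
        · positivity
    _ = C * ((Real.pi * (t / 2)) ^ (-(n : ℝ) / 2) *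
          (((n : ℝ) / t + 4 / t ^ 2 * r ^ 2) * Real.exp (-(r ^ 2 / (3 * t / 2))))) := by ring
    _ ≤ C * ((Real.pi * (t / 2)) ^ (-(n : ℝ) / 2) *
          (((n : ℝ) / t + 2 * (3 * t / 2) * (4 / t ^ 2)) *
            Real.exp (-(1 / (3 * t) * r ^ 2)))) := by
        apply mul_le_mul_of_nonneg_left _ hC0
        exact mul_le_mul_of_nonneg_left h3 hrp
    _ = _ := by ring

lemma integrable_blur_integrand (hz : Continuous z) (hC : ∀ y, |z y| ≤ C) {s : ℝ} (hs : 0 < s)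
    (x : E) : Integrable (fun y : E => gaussKernel n s (x - y) * z y) := by
  have hcont : Continuous (fun y : E => gaussKernel n s (x - y) * z y) :=
    (continuous_gaussKernel.comp (continuous_const.sub continuous_id)).mul hz
  apply integrable_of_gauss_bound hcont.aestronglyMeasurable
    (show (0:ℝ) < 1 / s by positivity) x
  intro y
  have hC0 : 0 ≤ C := le_trans (abs_nonneg _) (hC y)
  have hG := gaussKernel_nonneg (n := n) hs (x - y)
  rw [Real.norm_eq_abs, abs_mul, abs_of_nonneg hG]
  have harg : -(1 / s * ‖x - y‖ ^ 2) = -(‖x - y‖ ^ 2 / s) := by field_simp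
  rw [harg, gaussKernel_eq]
  calc (Real.pi * s) ^ (-(n : ℝ) / 2) * Real.exp (-(‖x - y‖ ^ 2 / s)) * |z y|
      ≤ (Real.pi * s) ^ (-(n : ℝ) / 2) * Real.exp (-(‖x - y‖ ^ 2 / s)) * C := by
        apply mul_le_mul_of_nonneg_left (hC y)
        positivity
    _ = ((Real.pi * s) ^ (-(n : ℝ) / 2) * C) * Real.exp (-(‖x - y‖ ^ 2 / s)) := by ring

lemma integrable_phi1 (hz : Continuous z) (hC : ∀ y, |z y| ≤ C) (ht : 0 < t) (x : E) :
    Integrable (fun y : E => z y • K1 n t (x - y)) := by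
  have hcont : Continuous (fun y : E => z y • K1 n t (x - y)) :=
    hz.smul (continuous_K1.comp (continuous_const.sub continuous_id))
  apply integrable_of_gauss_bound hcont.aestronglyMeasurable
    (show (0:ℝ) < 1 / (4 * t) by positivity) x
  intro y
  exact phi1_bound ht hC x x (by simp) y

lemma integrable_phi2 (hz : Continuous z) (hC : ∀ y, |z y| ≤ C) (ht : 0 < t) (i : Fin n) (x : E) :
    Integrable (fun y : E => ((-2 / t) * z y) • K2 n t i (x - y)) := by
  have hcont : Continuous (fun y : E => ((-2 / t) * z y) • K2 n t i (x - y)) :=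
    (continuous_const.mul hz).smul ((continuous_K2 i).comp (continuous_const.sub continuous_id))
  apply integrable_of_gauss_bound hcont.aestronglyMeasurable
    (show (0:ℝ) < 1 / (4 * t) by positivity) x
  intro y
  exact phi2_bound ht hC i x x (by simp) y


lemma hasFDerivAt_gaussBlur (hz : Continuous z) (hC : ∀ y, |z y| ≤ C) (ht : 0 < t) (x₀ : E) :
    HasFDerivAt (gaussBlur n t z) (∫ y, z y • K1 n t (x₀ - y)) x₀ := by
  have key := hasFDerivAt_integral_of_dominated_of_fderiv_le
    (𝕜 := ℝ) (μ := (volume : Measure E))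
    (F := fun (x : E) (y : E) => gaussKernel n t (x - y) * z y)
    (F' := fun (x : E) (y : E) => z y • K1 n t (x - y))
    (bound := fun y => (C * ((2 / t) * ((Real.pi * t) ^ (-(n : ℝ) / 2) *
      ((1 + 2 * t) * Real.exp (1 / (2 * t)))))) * Real.exp (-(1 / (4 * t) * ‖x₀ - y‖ ^ 2)))
    (x₀ := x₀) (s := Metric.ball x₀ 1) (Metric.ball_mem_nhds x₀ one_pos)
    (Filter.Eventually.of_forall fun x =>
      ((continuous_gaussKernel.comp (continuous_const.sub continuous_id)).mul
        hz).aestronglyMeasurable)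
    (integrable_blur_integrand hz hC ht x₀)
    ((hz.smul (continuous_K1.comp (continuous_const.sub continuous_id))).aestronglyMeasurable)
    (Filter.Eventually.of_forall fun y x hx => by
      have hx' : ‖x - x₀‖ ≤ 1 := by
        rw [← dist_eq_norm]
        exact le_of_lt (Metric.mem_ball.mp hx)
      exact phi1_bound ht hC x₀ x hx' y)
    (((integrable_gauss_shift (show (0:ℝ) < 1 / (4 * t) by positivity) x₀).const_mul _))
    (Filter.Eventually.of_forall fun y x hx =>
      (hasFDerivAt_kernel_shift ht y x).mul_const (z y))
  exact key

lemma fderiv_gaussBlur_eq (hz : Continuous z) (hC : ∀ y, |z y| ≤ C) (ht : 0 < t) (i : Fin n) :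
    (fun w : E => fderiv ℝ (gaussBlur n t z) w (EuclideanSpace.single i 1)) =
      fun w : E => ∫ y, (gaussKernel n t (w - y) * ((w - y) i)) * ((-2 / t) * z y) := by
  funext w
  rw [(hasFDerivAt_gaussBlur hz hC ht w).fderiv]
  rw [ContinuousLinearMap.integral_apply (integrable_phi1 hz hC ht w)]
  congr 1
  funext y
  simp [K1, EuclideanSpace.inner_single_right]
  ring

lemma hasFDerivAt_inner_blur (hz : Continuous z) (hC : ∀ y, |z y| ≤ C) (ht : 0 < t)
    (i : Fin n) (x₀ : E) :
    HasFDerivAt (fun w : E => ∫ y, (gaussKernel n t (w - y) * ((w - y) i)) * ((-2 / t) * z y))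
      (∫ y, ((-2 / t) * z y) • K2 n t i (x₀ - y)) x₀ := by
  have hint : Integrable (fun y : E =>
      (gaussKernel n t (x₀ - y) * ((x₀ - y) i)) * ((-2 / t) * z y)) := by
    apply ((integrable_phi1 hz hC ht x₀).apply_continuousLinearMap
      (EuclideanSpace.single i 1)).congr
    apply Filter.Eventually.of_forall
    intro y
    simp [K1, EuclideanSpace.inner_single_right]
    ring
  have key := hasFDerivAt_integral_of_dominated_of_fderiv_le
    (𝕜 := ℝ) (μ := (volume : Measure E))
    (F := fun (x : E) (y : E) => (gaussKernel n t (x - y) * ((x - y) i)) * ((-2 / t) * z y))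
    (F' := fun (x : E) (y : E) => ((-2 / t) * z y) • K2 n t i (x - y))
    (bound := fun y => (C * ((Real.pi * t) ^ (-(n : ℝ) / 2) * ((2 / t + 2 * t * (4 / t ^ 2)) *
        Real.exp (1 / (2 * t))))) * Real.exp (-(1 / (4 * t) * ‖x₀ - y‖ ^ 2)))
    (x₀ := x₀) (s := Metric.ball x₀ 1) (Metric.ball_mem_nhds x₀ one_pos)
    (Filter.Eventually.of_forall fun x => by
      apply Continuous.aestronglyMeasurable
      apply Continuous.mul _ (continuous_const.mul hz)
      apply Continuous.mul (continuous_gaussKernel.comp (continuous_const.sub continuous_id))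
      exact ((EuclideanSpace.proj i).continuous).comp (continuous_const.sub continuous_id))
    hint
    (Continuous.aestronglyMeasurable ((continuous_const.mul hz).smul
      ((continuous_K2 i).comp (continuous_const.sub continuous_id))))
    (Filter.Eventually.of_forall fun y x hx => by
      have hx' : ‖x - x₀‖ ≤ 1 := by
        rw [← dist_eq_norm]
        exact le_of_lt (Metric.mem_ball.mp hx)
      exact phi2_bound ht hC i x₀ x hx' y)
    (((integrable_gauss_shift (show (0:ℝ) < 1 / (4 * t) by positivity) x₀).const_mul _))
    (Filter.Eventually.of_forall fun y x hx =>
      (hasFDerivAt_kernel_mul_shift ht i y x).mul_const ((-2 / t) * z y))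
  exact key

lemma lap_coord (hz : Continuous z) (hC : ∀ y, |z y| ≤ C) (ht : 0 < t) (i : Fin n) (x : E) :
    fderiv ℝ (fun w => fderiv ℝ (gaussBlur n t z) w (EuclideanSpace.single i 1)) x
        (EuclideanSpace.single i 1) =
      ∫ y, (gaussKernel n t (x - y) * (4 * ((x - y) i) ^ 2 / t ^ 2 - 2 / t)) * z y := by
  rw [fderiv_gaussBlur_eq hz hC ht i]
  rw [(hasFDerivAt_inner_blur hz hC ht i x).fderiv]
  rw [ContinuousLinearMap.integral_apply (integrable_phi2 hz hC ht i x)]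
  congr 1
  funext y
  simp [K2, K1, EuclideanSpace.inner_single_right]
  field_simp
  ring


lemma laplacian_gaussBlur (hz : Continuous z) (hC : ∀ y, |z y| ≤ C) (ht : 0 < t) (x : E) :
    laplacian n (gaussBlur n t z) x =
      ∫ y, (gaussKernel n t (x - y) * (4 * ‖x - y‖ ^ 2 / t ^ 2 - 2 * n / t)) * z y := by
  have h1 : ∀ i : Fin n, Integrable (fun y : E =>
      (gaussKernel n t (x - y) * (4 * ((x - y) i) ^ 2 / t ^ 2 - 2 / t)) * z y) := by
    intro i
    apply ((integrable_phi2 hz hC ht i x).apply_continuousLinearMap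
      (EuclideanSpace.single i 1)).congr
    apply Filter.Eventually.of_forall
    intro y
    simp [K2, K1, EuclideanSpace.inner_single_right]
    field_simp
    ring
  unfold laplacian
  calc ∑ i : Fin n, fderiv ℝ (fun y => fderiv ℝ (gaussBlur n t z) y
        (EuclideanSpace.single i 1)) x (EuclideanSpace.single i 1)
      = ∑ i : Fin n, ∫ y,
          (gaussKernel n t (x - y) * (4 * ((x - y) i) ^ 2 / t ^ 2 - 2 / t)) * z y :=
        Finset.sum_congr rfl fun i _ => lap_coord hz hC ht i x
    _ = ∫ y, ∑ i : Fin n,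
          (gaussKernel n t (x - y) * (4 * ((x - y) i) ^ 2 / t ^ 2 - 2 / t)) * z y :=
        (integral_finset_sum Finset.univ (fun i _ => h1 i)).symm
    _ = ∫ y, (gaussKernel n t (x - y) * (4 * ‖x - y‖ ^ 2 / t ^ 2 - 2 * n / t)) * z y := by
        apply integral_congr_ae
        apply Filter.Eventually.of_forall
        intro y
        calc ∑ i : Fin n, (gaussKernel n t (x - y) * (4 * ((x - y) i) ^ 2 / t ^ 2 - 2 / t)) * z y
            = ∑ i : Fin n, ((4 * ((x - y) i) ^ 2 / t ^ 2 - 2 / t) *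
                (gaussKernel n t (x - y) * z y)) :=
              Finset.sum_congr rfl fun i _ => by ring
          _ = (∑ i : Fin n, (4 * ((x - y) i) ^ 2 / t ^ 2 - 2 / t)) *
                (gaussKernel n t (x - y) * z y) := by rw [Finset.sum_mul]
          _ = (4 * ‖x - y‖ ^ 2 / t ^ 2 - 2 * n / t) * (gaussKernel n t (x - y) * z y) := by
              congr 1
              rw [Finset.sum_sub_distrib, Finset.sum_const, Finset.card_univ, Fintype.card_fin,
                norm_sq_eq_sum_sq, nsmul_eq_mul]
              rw [Finset.mul_sum, Finset.sum_div]
              ring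
          _ = (gaussKernel n t (x - y) * (4 * ‖x - y‖ ^ 2 / t ^ 2 - 2 * n / t)) * z y := by ring

lemma hasDerivAt_gaussBlur_time (hz : Continuous z) (hC : ∀ y, |z y| ≤ C) (ht : 0 < t) (x : E) :
    HasDerivAt (fun s => gaussBlur n s z x)
      (∫ y, ((-(n : ℝ) / (2 * t) + ‖x - y‖ ^ 2 / t ^ 2) * gaussKernel n t (x - y)) * z y) t := by
  have key := hasDerivAt_integral_of_dominated_loc_of_deriv_le
    (𝕜 := ℝ) (μ := (volume : Measure E)) (x₀ := t) (s := Metric.ball t (t / 2))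
    (F := fun (s : ℝ) (y : E) => gaussKernel n s (x - y) * z y)
    (F' := fun (s : ℝ) (y : E) =>
      ((-(n : ℝ) / (2 * s) + ‖x - y‖ ^ 2 / s ^ 2) * gaussKernel n s (x - y)) * z y)
    (bound := fun y => (C * ((Real.pi * (t / 2)) ^ (-(n : ℝ) / 2) *
        ((n : ℝ) / t + 2 * (3 * t / 2) * (4 / t ^ 2)))) *
      Real.exp (-(1 / (3 * t) * ‖x - y‖ ^ 2)))
    (Metric.ball_mem_nhds t (by positivity))
    (Filter.Eventually.of_forall fun s =>
      ((continuous_gaussKernel.comp (continuous_const.sub continuous_id)).mul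
        hz).aestronglyMeasurable)
    (integrable_blur_integrand hz hC ht x)
    (by
      apply Continuous.aestronglyMeasurable
      apply Continuous.mul _ hz
      apply Continuous.mul
      · fun_prop
      · exact continuous_gaussKernel.comp (continuous_const.sub continuous_id))
    (Filter.Eventually.of_forall fun y s hs => by
      rw [Metric.mem_ball, Real.dist_eq, abs_lt] at hs
      exact time_bound (z := z) (s := s) ht hC x y (by linarith [hs.1]) (by linarith [hs.2]))
    (((integrable_gauss_shift (show (0:ℝ) < 1 / (3 * t) by positivity) x).const_mul _))
    (Filter.Eventually.of_forall fun y s hs => by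
      rw [Metric.mem_ball, Real.dist_eq, abs_lt] at hs
      have hs0 : 0 < s := by linarith [hs.1]
      exact (hasDerivAt_gaussKernel_time (x - y) hs0).mul_const (z y))
  exact key.2

end helpers

/-- The Gaussian scale space solves the diffusion (heat) equation
`∂u/∂t(t,x) = (1/4)·Δ_x u(t,x)` for bounded continuous signals. -/
theorem gaussian_scale_space_heat_equation (n : ℕ)
    (z : EuclideanSpace ℝ (Fin n) → ℝ)
    (hz : Continuous z) (hb : ∃ C : ℝ, ∀ x, |z x| ≤ C)
    (t : ℝ) (ht : 0 < t) (x : EuclideanSpace ℝ (Fin n)) :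
    HasDerivAt (fun s => gaussBlur n s z x)
      ((1 / 4) * laplacian n (gaussBlur n t z) x) t := by
  obtain ⟨C, hC⟩ := hb
  have hT := hasDerivAt_gaussBlur_time hz hC ht x
  convert hT using 1
  rw [laplacian_gaussBlur hz hC ht x, ← integral_const_mul]
  exact integral_congr_ae (Filter.Eventually.of_forall fun y => by ring)
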